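/- (Wallis formula) As n tends to infinity, 2^{4n} / (n · C(2n, n)^2) tends to π, where C(2n, n) denotes the central binomial coefficient. -/

import Mathlib

open scoped Real

open Filter

theorem stmt_15 :
    Filter.Tendsto
      (fun n : ℕ => (2 : ℝ) ^ (4 * n) / ((n : ℝ) * (Nat.choose (2 * n) n : ℝ) ^ 2))
      Filter.atTop (nhds π) := by
  have h2 : Tendsto (fun n : ℕ => (2 * (n : ℝ) + 1) / n) atTop (nhds 2) := by
    have h : Tendsto (fun n : ℕ => 1 / (n : ℝ)) atTop (nhds 0) := tendsto_one_div_atTop_nhds_zero_nat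
    have : Tendsto (fun n : ℕ => 2 + 1 / (n : ℝ)) atTop (nhds (2 + 0)) :=
      tendsto_const_nhds.add h
    rw [add_zero] at this
    refine this.congr' ?_
    filter_upwards [eventually_ge_atTop 1] with n hn
    have hn' : (n : ℝ) ≠ 0 := Nat.cast_ne_zero.mpr (by omega)
    field_simp
  have h1 : Tendsto (fun n : ℕ => Real.Wallis.W n * ((2 * (n : ℝ) + 1) / n)) atTop
      (nhds (π / 2 * 2)) := Real.Wallis.tendsto_W_nhds_pi_div_two.mul h2
  rw [div_mul_cancel₀ _ (two_ne_zero)] at h1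
  refine h1.congr' ?_
  filter_upwards [eventually_ge_atTop 1] with n hn
  have hn' : (n : ℝ) ≠ 0 := Nat.cast_ne_zero.mpr (by omega)
  rw [Real.Wallis.W_eq_factorial_ratio]
  have hc : (Nat.choose (2 * n) n : ℝ) * (Nat.factorial n : ℝ) * (Nat.factorial n : ℝ)
      = (Nat.factorial (2 * n) : ℝ) := by
    rw [← Nat.cast_mul, ← Nat.cast_mul]
    norm_cast
    have := Nat.choose_mul_factorial_mul_factorial (show n ≤ 2 * n by omega)
    simpa [Nat.two_mul, Nat.add_sub_cancel] using this
  have hf : (Nat.factorial n : ℝ) ≠ 0 := Nat.cast_ne_zero.mpr (Nat.factorial_ne_zero n)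
  have h2n : (Nat.factorial (2 * n) : ℝ) ≠ 0 := Nat.cast_ne_zero.mpr (Nat.factorial_ne_zero _)
  have h2n1 : (2 * (n : ℝ) + 1) ≠ 0 := by positivity
  have hcne : (Nat.choose (2 * n) n : ℝ) ≠ 0 := by
    intro h; rw [h] at hc; simp at hc; exact h2n hc.symm
  field_simp
  rw [← hc]
  ring
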